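/- On a probability space, let z take values in a measurable space Z, v take values in a measurable space V, and let u be a real random variable, with z independent of the pair (u, v). Let f_z : Z → ℝ and f_v : V → ℝ be measurable with f_z(z), f_v(v) square-integrable and u square-integrable. Let β ∈ ℝ and define x = f_z(z) + f_v(v) and y = βx + u. Then Cov(f_z(z), y) = β · Var(f_z(z)); in particular, if Var(f_z(z)) ≠ 0 then β = Cov(f_z(z), y)/Var(f_z(z)). -/

import Mathlib

open MeasureTheory ProbabilityTheory

/-- Covariance of two real random variables. -/
noncomputable def cov {Ωs : Type*} [MeasurableSpace Ωs] (μ : Measure Ωs)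
    (X Y : Ωs → ℝ) : ℝ :=
  ∫ ω, (X ω - ∫ ω', X ω' ∂μ) * (Y ω - ∫ ω', Y ω' ∂μ) ∂μ

lemma integrable_mul_of_memℒp2 {Ωs : Type*} [MeasurableSpace Ωs] {μ : Measure Ωs}
    {X Y : Ωs → ℝ} (hX : MemLp X 2 μ) (hY : MemLp Y 2 μ) :
    Integrable (fun ω => X ω * Y ω) μ := by
  have h : Integrable (fun ω => (((X ω + Y ω) ^ 2 - X ω ^ 2) - Y ω ^ 2) / 2) μ :=
    (((hX.add hY).integrable_sq.sub hX.integrable_sq).sub hY.integrable_sq).div_const 2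
  refine h.congr (Filter.Eventually.of_forall fun ω => ?_)
  ring

lemma cov_eq {Ωs : Type*} [MeasurableSpace Ωs] {μ : Measure Ωs} [IsProbabilityMeasure μ]
    {X Y : Ωs → ℝ} (hX : MemLp X 2 μ) (hY : MemLp Y 2 μ) :
    cov μ X Y = (∫ ω, X ω * Y ω ∂μ) - (∫ ω, X ω ∂μ) * (∫ ω, Y ω ∂μ) := by
  have hXi : Integrable X μ := hX.integrable one_le_two
  have hYi : Integrable Y μ := hY.integrable one_le_two
  have hXY : Integrable (fun ω => X ω * Y ω) μ := integrable_mul_of_memℒp2 hX hY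
  set a := ∫ ω, X ω ∂μ
  set b := ∫ ω, Y ω ∂μ
  have : cov μ X Y = ∫ ω, (X ω * Y ω - a * Y ω - b * X ω + a * b) ∂μ := by
    unfold cov; congr 1; funext ω; ring
  have h1 : Integrable (fun ω => a * Y ω) μ := hYi.const_mul a
  have h2 : Integrable (fun ω => b * X ω) μ := hXi.const_mul b
  have h3 : Integrable (fun ω => X ω * Y ω - a * Y ω) μ := hXY.sub h1
  have h4 : Integrable (fun ω => X ω * Y ω - a * Y ω - b * X ω) μ := h3.sub h2
  rw [this, integral_add h4 (integrable_const _), integral_sub h3 h2,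
    integral_sub hXY h1, integral_const_mul, integral_const_mul, integral_const]
  simp only [probReal_univ, measure_univ, ENNReal.toReal_one, smul_eq_mul, one_mul]
  ring

/-- Identification with an additive instrument-exposure equation
(Proposition 2): if `x = f_z(z) + f_v(v)`, `y = βx + u`, and `z ⟂ (u, v)`, then
`Cov(f_z(z), y) = β·Var(f_z(z))`; in particular `β` is identified whenever
`Var(f_z(z)) ≠ 0`. -/
theorem additive_exposure_identification
    {Ωs : Type*} [MeasurableSpace Ωs] (μ : Measure Ωs) [IsProbabilityMeasure μ]
    {Z V : Type*} [MeasurableSpace Z] [MeasurableSpace V]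
    (z : Ωs → Z) (hz : Measurable z) (v : Ωs → V) (hv : Measurable v)
    (u : Ωs → ℝ) (hu2 : MemLp u 2 μ)
    (hindep : IndepFun z (fun ω => (u ω, v ω)) μ)
    (fz : Z → ℝ) (hfz : Measurable fz) (fv : V → ℝ) (hfv : Measurable fv)
    (hfz2 : MemLp (fun ω => fz (z ω)) 2 μ)
    (hfv2 : MemLp (fun ω => fv (v ω)) 2 μ)
    (β : ℝ)
    (x : Ωs → ℝ) (hx : x = fun ω => fz (z ω) + fv (v ω))
    (y : Ωs → ℝ) (hy : y = fun ω => β * x ω + u ω) :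
    cov μ (fun ω => fz (z ω)) y = β * cov μ (fun ω => fz (z ω)) (fun ω => fz (z ω)) ∧
    (cov μ (fun ω => fz (z ω)) (fun ω => fz (z ω)) ≠ 0 →
      β = cov μ (fun ω => fz (z ω)) y /
        cov μ (fun ω => fz (z ω)) (fun ω => fz (z ω))) := by
  set X : Ωs → ℝ := fun ω => fz (z ω) with hX
  set Fv : Ωs → ℝ := fun ω => fv (v ω) with hFv
  -- independence facts
  have hXu : IndepFun X u μ := by
    have := hindep.comp hfz (measurable_fst.comp (measurable_id.prodMk measurable_snd))
    exact this.comp measurable_id measurable_fst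
  have hXFv : IndepFun X Fv μ := by
    have h := hindep.comp hfz (hfv.comp measurable_snd)
    simpa [Function.comp_def] using h
  have hEXu : ∫ ω, X ω * u ω ∂μ = (∫ ω, X ω ∂μ) * (∫ ω, u ω ∂μ) :=
    hXu.integral_fun_mul_eq_mul_integral hfz2.aestronglyMeasurable hu2.aestronglyMeasurable
  have hEXFv : ∫ ω, X ω * Fv ω ∂μ = (∫ ω, X ω ∂μ) * (∫ ω, Fv ω ∂μ) :=
    hXFv.integral_fun_mul_eq_mul_integral hfz2.aestronglyMeasurable hfv2.aestronglyMeasurable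
  -- memℒp of y
  have hy2 : MemLp y 2 μ := by
    rw [hy, hx]
    exact (((hfz2.add hfv2).const_mul β)).add hu2
  have hXi : Integrable X μ := hfz2.integrable one_le_two
  have hFvi : Integrable Fv μ := hfv2.integrable one_le_two
  have hui : Integrable u μ := hu2.integrable one_le_two
  have hXXi : Integrable (fun ω => X ω * X ω) μ := integrable_mul_of_memℒp2 hfz2 hfz2
  have hXFvi : Integrable (fun ω => X ω * Fv ω) μ := integrable_mul_of_memℒp2 hfz2 hfv2
  have hXui : Integrable (fun ω => X ω * u ω) μ := integrable_mul_of_memℒp2 hfz2 hu2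
  -- expectations of y and X*y
  have hEy : ∫ ω, y ω ∂μ = β * (∫ ω, X ω ∂μ) + β * (∫ ω, Fv ω ∂μ) + ∫ ω, u ω ∂μ := by
    have h1 : y = fun ω => (β * X ω + β * Fv ω) + u ω := by
      rw [hy, hx]; funext ω; ring
    have hA : Integrable (fun ω => β * X ω) μ := hXi.const_mul β
    have hB : Integrable (fun ω => β * Fv ω) μ := hFvi.const_mul β
    have hC : Integrable (fun ω => β * X ω + β * Fv ω) μ := hA.add hB
    rw [h1, integral_add hC hui, integral_add hA hB, integral_const_mul, integral_const_mul]
  have hEXy : ∫ ω, X ω * y ω ∂μ =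
      β * (∫ ω, X ω * X ω ∂μ) + β * (∫ ω, X ω * Fv ω ∂μ) + ∫ ω, X ω * u ω ∂μ := by
    have h1 : (fun ω => X ω * y ω) =
        fun ω => (β * (X ω * X ω) + β * (X ω * Fv ω)) + X ω * u ω := by
      rw [hy, hx]; funext ω; ring
    have hA : Integrable (fun ω => β * (X ω * X ω)) μ := hXXi.const_mul β
    have hB : Integrable (fun ω => β * (X ω * Fv ω)) μ := hXFvi.const_mul β
    have hC : Integrable (fun ω => β * (X ω * X ω) + β * (X ω * Fv ω)) μ := hA.add hB
    rw [h1, integral_add hC hXui, integral_add hA hB, integral_const_mul, integral_const_mul]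
  have hcovXy : cov μ X y = β * cov μ X X := by
    rw [cov_eq hfz2 hy2, cov_eq hfz2 hfz2, hEXy, hEy, hEXu, hEXFv]
    ring
  refine ⟨hcovXy, fun hne => ?_⟩
  rw [hcovXy, mul_div_assoc, div_self hne, mul_one]
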